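/- Let $1 < p < \infty$ and $s > 1/2 - 1/(2p)$. Then there exists a constant $C > 0$ such that for all nonnegative functions $b, c : \mathbb{Z} \to [0, \infty)$, $\sum_{n \in \mathbb{Z}} \ \sum_{\substack{(n_1, n_2, n_3) \in \Lambda(n) \\ 4 n_1^2 \le |n_3|, \ 4 n_2^2 \le |n_3|}} \frac{n^2 \, |n_3|}{\left| 3(n_1+n_2)(n_1+n_3)(n_2+n_3) \right|^{3/2} \, \langle n_1 \rangle^{s} \langle n_2 \rangle^{s} \langle n_3 \rangle^{s} \langle n \rangle^{3s}} \, c(n_1) \, b(-n_2) \, b(n_3) \, b(n)^3 \le C \, \| c \|_{\ell^p} \, \| b \|_{\ell^p}^5$. -/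

import Mathlib

open scoped ENNReal

/-- The Japanese bracket `⟨x⟩ = (1 + |x|²)^(1/2)`. -/
noncomputable def jb (x : ℝ) : ℝ := Real.sqrt (1 + x ^ 2)
lemma jb_nonneg (x : ℝ) : 0 ≤ jb x := Real.sqrt_nonneg _
lemma jb_sq (x : ℝ) : jb x ^ 2 = 1 + x ^ 2 := Real.sq_sqrt (by positivity)
lemma one_le_jb (x : ℝ) : 1 ≤ jb x := by
  nlinarith [jb_sq x, jb_nonneg x, sq_nonneg x]
lemma jb_pos (x : ℝ) : 0 < jb x := lt_of_lt_of_le one_pos (one_le_jb x)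
lemma abs_le_jb (x : ℝ) : |x| ≤ jb x := by
  rw [jb, show |x| = Real.sqrt (x^2) by rw [Real.sqrt_sq_eq_abs]]
  exact Real.sqrt_le_sqrt (by linarith)

-- Hölder for tsum over ℤ
lemma tsum_holder (f g : ℤ → ℝ≥0∞) {p q : ℝ} (hpq : p.HolderConjugate q) :
    ∑' n, f n * g n ≤ (∑' n, f n ^ p) ^ (1 / p) * (∑' n, g n ^ q) ^ (1 / q) := by
  have := ENNReal.lintegral_mul_le_Lp_mul_Lq (MeasureTheory.Measure.count : MeasureTheory.Measure ℤ)
    hpq (Measurable.of_discrete (f := f)).aemeasurable (Measurable.of_discrete (f := g)).aemeasurable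
  simpa [MeasureTheory.lintegral_count] using this

lemma tsum_abs_rpow_ne_top {r : ℝ} (hr : 1 < r) :
    (∑' m : ℤ, ENNReal.ofReal (|(m : ℝ)| ^ (-r))) ≠ ∞ := by
  rw [← ENNReal.ofReal_tsum_of_nonneg (fun n => by positivity) (Real.summable_abs_int_rpow hr)]
  exact ENNReal.ofReal_ne_top

lemma tsum_jb_rpow_ne_top {r : ℝ} (hr : 1 < r) :
    (∑' k : ℤ, ENNReal.ofReal (jb k ^ (-r))) ≠ ∞ := by
  have hb : ∀ k : ℤ, ENNReal.ofReal (jb k ^ (-r)) ≤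
      ENNReal.ofReal (|(k : ℝ)| ^ (-r)) + (if k = 0 then 1 else 0) := by
    intro k
    rcases eq_or_ne k 0 with hk | hk
    · subst hk
      have h0 : jb 0 = 1 := by simp [jb]
      simp [h0, Real.one_rpow, Real.zero_rpow (neg_ne_zero.2 (by linarith : r ≠ 0))]
    · have hk1 : (1:ℝ) ≤ |(k:ℝ)| := by
        rw [← Int.cast_abs]; exact_mod_cast Int.one_le_abs hk
      have : jb k ^ (-r) ≤ |(k:ℝ)| ^ (-r) :=
        Real.rpow_le_rpow_of_nonpos (by linarith) (abs_le_jb _) (by linarith)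
      simp only [hk, if_false, add_zero]
      exact ENNReal.ofReal_le_ofReal this
  refine ne_top_of_le_ne_top ?_ (ENNReal.tsum_le_tsum hb)
  rw [ENNReal.tsum_add]
  refine ENNReal.add_ne_top.2 ⟨tsum_abs_rpow_ne_top hr, ?_⟩
  rw [tsum_eq_single 0 (by intro n h; simp [h])]
  simp

set_option maxHeartbeats 1000000 in
lemma weight_bound {s : ℝ} (hs0 : 0 < s) (n n1 n2 n3 : ℤ)
    (hn : n = n1 + n2 + n3) (hne : (n1 + n2) * (n1 + n3) * (n2 + n3) ≠ 0)
    (hk1 : 4 * n1 ^ 2 ≤ |n3|) (hk2 : 4 * n2 ^ 2 ≤ |n3|) :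
    (n : ℝ) ^ 2 * |(n3 : ℝ)| /
        (|((3 * (n1 + n2) * (n1 + n3) * (n2 + n3) : ℤ) : ℝ)| ^ ((3 : ℝ) / 2) *
          (jb n1 ^ s * jb n2 ^ s * jb n3 ^ s * jb n ^ (3 * s))) ≤
      9 / 4 * 2 ^ s *
        (|((n1 + n2 : ℤ) : ℝ)| ^ (-(3 : ℝ) / 2) *
          (jb n1 ^ (-(3 * s)) * jb n3 ^ (-(2 * s)))) := by
  -- integer facts
  have h12 : n1 + n2 ≠ 0 := fun h => hne (by rw [h]; ring)
  have h13 : n1 + n3 ≠ 0 := fun h => hne (by rw [h]; ring)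
  have h23 : n2 + n3 ≠ 0 := fun h => hne (by rw [h]; ring)
  have h3ge4 : (4 : ℤ) ≤ |n3| := by
    by_contra hcon
    push_neg at hcon
    have e1 : n1 = 0 := by
      have h' : n1 ^ 2 < 1 := by linarith
      have h'' : n1 ^ 2 + 1 ≤ 1 := Int.add_one_le_iff.2 h'
      have : n1 ^ 2 = 0 := le_antisymm (by linarith) (sq_nonneg n1)
      exact pow_eq_zero_iff (two_ne_zero) |>.1 this
    have e2 : n2 = 0 := by
      have h' : n2 ^ 2 < 1 := by linarith
      have h'' : n2 ^ 2 + 1 ≤ 1 := Int.add_one_le_iff.2 h'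
      have : n2 ^ 2 = 0 := le_antisymm (by linarith) (sq_nonneg n2)
      exact pow_eq_zero_iff (two_ne_zero) |>.1 this
    exact h12 (by rw [e1, e2]; norm_num)
  have habs_aux : ∀ k : ℤ, 4 * k ^ 2 ≤ |n3| → 4 * |k| ≤ |n3| := by
    intro k hk
    rcases eq_or_ne k 0 with h | h
    · simpa [h] using h3ge4
    · have h1 : 1 ≤ |k| := Int.one_le_abs h
      have h2 : 4 * |k| * 1 ≤ 4 * |k| * |k| :=
        mul_le_mul_of_nonneg_left h1 (by positivity)
      have h3 : 4 * |k| * |k| = 4 * k ^ 2 := by rw [← sq_abs]; ring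
      rw [h3] at h2
      linarith
  have h1abs : 4 * |n1| ≤ |n3| := habs_aux n1 hk1
  have h2abs : 4 * |n2| ≤ |n3| := habs_aux n2 hk2
  -- real versions
  set x : ℝ := (n : ℝ) with hxdef
  set x1 : ℝ := (n1 : ℝ) with hx1def
  set x2 : ℝ := (n2 : ℝ) with hx2def
  set x3 : ℝ := (n3 : ℝ) with hx3def
  have hx : x = x1 + x2 + x3 := by rw [hxdef, hx1def, hx2def, hx3def, hn]; push_cast; ring
  have F3 : (4 : ℝ) ≤ |x3| := by
    rw [hx3def, ← Int.cast_abs]; exact_mod_cast h3ge4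
  have F1 : 4 * |x1| ≤ |x3| := by
    rw [hx1def, hx3def, ← Int.cast_abs, ← Int.cast_abs]; exact_mod_cast h1abs
  have F2 : 4 * |x2| ≤ |x3| := by
    rw [hx2def, hx3def, ← Int.cast_abs, ← Int.cast_abs]; exact_mod_cast h2abs
  have F4 : 4 * x1 ^ 2 ≤ |x3| := by
    rw [hx1def, hx3def, ← Int.cast_abs]; exact_mod_cast hk1
  have F5 : 4 * x2 ^ 2 ≤ |x3| := by
    rw [hx2def, hx3def, ← Int.cast_abs]; exact_mod_cast hk2
  have habs_up : |x| ≤ 3 / 2 * |x3| := by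
    calc |x| = |x1 + x2 + x3| := by rw [hx]
      _ ≤ |x1 + x2| + |x3| := abs_add_le _ _
      _ ≤ |x1| + |x2| + |x3| := by linarith [abs_add_le x1 x2]
      _ ≤ 3 / 2 * |x3| := by linarith
  have habs_lo : |x3| / 2 ≤ |x| := by
    have key : x3 = x + -x1 + -x2 := by rw [hx]; ring
    have h1 : |x3| ≤ |x + -x1| + |x2| := by
      rw [key]; simpa [abs_neg] using abs_add_le (x + -x1) (-x2)
    have h2 : |x + -x1| ≤ |x| + |x1| := by
      simpa [abs_neg] using abs_add_le x (-x1)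
    linarith
  have hn2 : x ^ 2 ≤ 9 / 4 * x3 ^ 2 := by
    have h := mul_self_le_mul_self (abs_nonneg x) habs_up
    have e1 : |x| * |x| = x ^ 2 := by rw [← sq_abs]; ring
    have e2 : 3 / 2 * |x3| * (3 / 2 * |x3|) = 9 / 4 * x3 ^ 2 := by
      rw [← sq_abs x3]; ring
    rw [e1, e2] at h
    exact h
  have hxlow2 : x3 ^ 2 / 4 ≤ x ^ 2 := by
    have h := mul_self_le_mul_self (by positivity : (0:ℝ) ≤ |x3| / 2) habs_lo
    have e1 : |x| * |x| = x ^ 2 := by rw [← sq_abs]; ring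
    have e2 : |x3| / 2 * (|x3| / 2) = x3 ^ 2 / 4 := by
      rw [← sq_abs x3]; ring
    rw [e1, e2] at h
    exact h
  -- jb facts
  have J1 : jb x1 ^ 2 ≤ jb x := by
    calc jb x1 ^ 2 = 1 + x1 ^ 2 := jb_sq x1
      _ ≤ |x3| / 2 := by linarith
      _ ≤ |x| := habs_lo
      _ ≤ jb x := abs_le_jb x
  have J3 : jb x3 ≤ 2 * jb x := by
    have h4 : Real.sqrt 4 = 2 := by
      rw [show (4 : ℝ) = 2 ^ 2 by norm_num, Real.sqrt_sq (by norm_num)]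
    have : jb x3 ≤ Real.sqrt (4 * (1 + x ^ 2)) := Real.sqrt_le_sqrt (by linarith)
    rwa [Real.sqrt_mul (by norm_num) _, h4, ← jb] at this
  have h1333 : (3 / 4 : ℝ) * |x3| ≤ |x1 + x3| := by
    have : |x3| ≤ |x1 + x3| + |x1| := by
      calc |x3| = |(x1 + x3) + -x1| := by ring_nf
        _ ≤ |x1 + x3| + |x1| := by simpa [abs_neg] using abs_add_le (x1 + x3) (-x1)
    linarith
  have h2333 : (3 / 4 : ℝ) * |x3| ≤ |x2 + x3| := by
    have : |x3| ≤ |x2 + x3| + |x2| := by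
      calc |x3| = |(x2 + x3) + -x2| := by ring_nf
        _ ≤ |x2 + x3| + |x2| := by simpa [abs_neg] using abs_add_le (x2 + x3) (-x2)
    linarith
  -- abbreviations
  set A : ℝ := |((n1 + n2 : ℤ) : ℝ)| with hAdef
  have hAeq : A = |x1 + x2| := by rw [hAdef]; push_cast; rfl
  have hA : 0 < A := by
    rw [hAdef]
    exact abs_pos.2 (Int.cast_ne_zero.2 h12)
  set Pa : ℝ := |((3 * (n1 + n2) * (n1 + n3) * (n2 + n3) : ℤ) : ℝ)| with hPdef
  have hPa : Pa = 3 * |x1 + x2| * |x1 + x3| * |x2 + x3| := by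
    rw [hPdef]; push_cast
    rw [abs_mul, abs_mul, abs_mul]
    norm_num; rfl
  have hP : A * x3 ^ 2 ≤ Pa := by
    rw [hPa, hAeq]
    have hb' : |x3| ≤ 4 / 3 * |x1 + x3| := by linarith
    have hc' : |x3| ≤ 4 / 3 * |x2 + x3| := by linarith
    have hbc : |x3| * |x3| ≤ (4 / 3 * |x1 + x3|) * (4 / 3 * |x2 + x3|) :=
      mul_le_mul hb' hc' (abs_nonneg _) (by positivity)
    have hstep : |x1 + x2| * (|x3| * |x3|) ≤
        |x1 + x2| * ((4 / 3 * |x1 + x3|) * (4 / 3 * |x2 + x3|)) :=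
      mul_le_mul_of_nonneg_left hbc (abs_nonneg _)
    have hX : 0 ≤ |x1 + x2| * |x1 + x3| * |x2 + x3| :=
      mul_nonneg (mul_nonneg (abs_nonneg _) (abs_nonneg _)) (abs_nonneg _)
    have hsq : x3 ^ 2 = |x3| * |x3| := by rw [← sq_abs]; ring
    rw [hsq]
    linarith [hstep, hX]
  -- rpow abbreviations
  set u1 : ℝ := jb x1 ^ s with hu1def
  set u2 : ℝ := jb x2 ^ s with hu2def
  set u3 : ℝ := jb x3 ^ s with hu3def
  set u : ℝ := jb x ^ (3 * s) with hudef
  have hu1 : 0 < u1 := Real.rpow_pos_of_pos (jb_pos _) _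
  have hu2 : 0 < u2 := Real.rpow_pos_of_pos (jb_pos _) _
  have hu3 : 0 < u3 := Real.rpow_pos_of_pos (jb_pos _) _
  have hu : 0 < u := Real.rpow_pos_of_pos (jb_pos _) _
  have h2s : (0 : ℝ) < 2 ^ s := Real.rpow_pos_of_pos two_pos s
  -- power identities
  have e1 : jb x1 ^ (3 * s) = u1 ^ 3 := by
    rw [hu1def, show (3 : ℝ) * s = s * ((3 : ℕ) : ℝ) by push_cast; ring,
      Real.rpow_mul (jb_nonneg _), Real.rpow_natCast]
  have e3 : jb x3 ^ (2 * s) = u3 ^ 2 := by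
    rw [hu3def, show (2 : ℝ) * s = s * ((2 : ℕ) : ℝ) by push_cast; ring,
      Real.rpow_mul (jb_nonneg _), Real.rpow_natCast]
  have g1 : u1 ^ 2 ≤ jb x ^ s := by
    have h := Real.rpow_le_rpow (by positivity) J1 hs0.le
    rw [← Real.rpow_natCast (jb x1) 2, ← Real.rpow_mul (jb_nonneg _)] at h
    rw [hu1def, ← Real.rpow_natCast (jb x1 ^ s) 2, ← Real.rpow_mul (jb_nonneg _)]
    rw [show s * ((2:ℕ):ℝ) = ((2:ℕ):ℝ) * s by ring]
    exact h
  have g3 : u3 / 2 ^ s ≤ jb x ^ s := by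
    have hd : jb x3 / 2 ≤ jb x := by linarith
    have h := Real.rpow_le_rpow (div_nonneg (jb_nonneg _) (by norm_num)) hd hs0.le
    rwa [Real.div_rpow (jb_nonneg _) (by norm_num), ← hu3def] at h
  have gx1 : (1 : ℝ) ≤ jb x ^ s := by
    have := Real.rpow_le_rpow zero_le_one (one_le_jb x) hs0.le
    rwa [Real.one_rpow] at this
  have gu2 : (1 : ℝ) ≤ u2 := by
    have := Real.rpow_le_rpow zero_le_one (one_le_jb x2) hs0.le
    rwa [Real.one_rpow] at this
  have uge : u1 ^ 2 * (u3 / 2 ^ s) ≤ u := by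
    have expand : u = jb x ^ s * jb x ^ s * jb x ^ s := by
      rw [hudef, show (3 : ℝ) * s = s + s + s by ring, Real.rpow_add (jb_pos _),
        Real.rpow_add (jb_pos _)]
    rw [expand]
    calc u1 ^ 2 * (u3 / 2 ^ s) = u1 ^ 2 * (u3 / 2 ^ s) * 1 := by ring
      _ ≤ jb x ^ s * jb x ^ s * jb x ^ s := by
          have h12' : u1 ^ 2 * (u3 / 2 ^ s) ≤ jb x ^ s * jb x ^ s :=
            mul_le_mul g1 g3 (div_nonneg hu3.le h2s.le) (Real.rpow_nonneg (jb_nonneg _) _)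
          exact mul_le_mul h12' gx1 zero_le_one
            (mul_nonneg (Real.rpow_nonneg (jb_nonneg _) _) (Real.rpow_nonneg (jb_nonneg _) _))
  -- cube identity
  have hx3cube : (x3 ^ 2 : ℝ) ^ ((3 : ℝ) / 2) = |x3| ^ 3 := by
    rw [show x3 ^ 2 = |x3| ^ 2 by rw [sq_abs], ← Real.rpow_natCast |x3| 2,
      ← Real.rpow_mul (abs_nonneg _), ← Real.rpow_natCast |x3| 3]
    norm_num
  -- positivity of denominators
  have hPapos : 0 < Pa := by
    rw [hPdef]
    refine abs_pos.2 (Int.cast_ne_zero.2 ?_)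
    have e : (3 : ℤ) * (n1 + n2) * (n1 + n3) * (n2 + n3)
        = 3 * ((n1 + n2) * (n1 + n3) * (n2 + n3)) := by ring
    rw [e]
    exact mul_ne_zero (by norm_num) hne
  have hD : 0 < Pa ^ ((3 : ℝ) / 2) * (u1 * u2 * u3 * u) := by positivity
  have hE : 0 < A ^ ((3 : ℝ) / 2) * (u1 ^ 3 * u3 ^ 2) := by positivity
  -- rewrite RHS as a quotient
  have hRHSeq : 9 / 4 * 2 ^ s * (A ^ (-(3 : ℝ) / 2) * (jb x1 ^ (-(3 * s)) * jb x3 ^ (-(2 * s))))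
      = 9 / 4 * 2 ^ s / (A ^ ((3 : ℝ) / 2) * (u1 ^ 3 * u3 ^ 2)) := by
    rw [show (-(3 : ℝ) / 2) = -((3 : ℝ) / 2) by ring, show -(3 * s) = -(3 * s) by rfl,
      Real.rpow_neg hA.le, show (-(3 * s)) = -(3 * s) by rfl,
      Real.rpow_neg (jb_nonneg x1), Real.rpow_neg (jb_nonneg x3), e1, e3]
    field_simp
  rw [hRHSeq, div_le_div_iff₀ hD hE]
  -- main multiplicative inequality
  have hnum : x ^ 2 * |x3| ≤ 9 / 4 * |x3| ^ 3 := by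
    have h := mul_le_mul_of_nonneg_right hn2 (abs_nonneg x3)
    have e : 9 / 4 * x3 ^ 2 * |x3| = 9 / 4 * |x3| ^ 3 := by
      rw [show x3 ^ 2 = |x3| ^ 2 by rw [sq_abs]]; ring
    rw [e] at h
    exact h
  have hPge : A ^ ((3 : ℝ) / 2) * |x3| ^ 3 ≤ Pa ^ ((3 : ℝ) / 2) := by
    have h := Real.rpow_le_rpow (by positivity) hP (by norm_num : (0:ℝ) ≤ 3/2)
    rwa [Real.mul_rpow hA.le (sq_nonneg _), hx3cube] at h
  have huprod : u1 ^ 3 * u3 ^ 2 ≤ (u1 * u2 * u3 * u) * 2 ^ s := by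
    have step : (u1 * 1 * u3) * (u1 ^ 2 * (u3 / 2 ^ s)) ≤ (u1 * u2 * u3) * u := by
      apply mul_le_mul
      · apply mul_le_mul_of_nonneg_right _ hu3.le
        rw [mul_one]
        exact le_mul_of_one_le_right hu1.le gu2
      · exact uge
      · positivity
      · positivity
    calc u1 ^ 3 * u3 ^ 2 = ((u1 * 1 * u3) * (u1 ^ 2 * (u3 / 2 ^ s))) * 2 ^ s := by
          field_simp
      _ ≤ ((u1 * u2 * u3) * u) * 2 ^ s := by
          exact mul_le_mul_of_nonneg_right step h2s.le
  calc x ^ 2 * |x3| * (A ^ ((3 : ℝ) / 2) * (u1 ^ 3 * u3 ^ 2))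
      ≤ (9 / 4 * |x3| ^ 3) * (A ^ ((3 : ℝ) / 2) * (u1 ^ 3 * u3 ^ 2)) := by
        apply mul_le_mul_of_nonneg_right hnum
        positivity
    _ = 9 / 4 * ((A ^ ((3 : ℝ) / 2) * |x3| ^ 3) * (u1 ^ 3 * u3 ^ 2)) := by ring
    _ ≤ 9 / 4 * (Pa ^ ((3 : ℝ) / 2) * ((u1 * u2 * u3 * u) * 2 ^ s)) := by
        apply mul_le_mul_of_nonneg_left _ (by norm_num : (0:ℝ) ≤ 9/4)
        apply mul_le_mul hPge huprod (by positivity) (by positivity)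
    _ = 9 / 4 * 2 ^ s * (Pa ^ ((3 : ℝ) / 2) * (u1 * u2 * u3 * u)) := by ring

lemma ofReal_le_lp (b : ℤ → ℝ) {p : ℝ} (hp : 0 < p) (k : ℤ) :
    ENNReal.ofReal (b k) ≤ (∑' n : ℤ, ENNReal.ofReal (b n) ^ p) ^ (1 / p) := by
  have h1 : ENNReal.ofReal (b k) ^ p ≤ ∑' n : ℤ, ENNReal.ofReal (b n) ^ p :=
    ENNReal.le_tsum k
  have h2 := ENNReal.rpow_le_rpow h1 (by positivity : (0:ℝ) ≤ 1 / p)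
  rwa [← ENNReal.rpow_mul, mul_one_div, div_self hp.ne', ENNReal.rpow_one] at h2

lemma point_bound {s p : ℝ} (hs0 : 0 < s) (hp0 : 0 < p) (b c : ℤ → ℝ)
    (hb : ∀ n, 0 ≤ b n) (hc : ∀ n, 0 ≤ c n)
    (n n1 n2 n3 : ℤ) (hn : n = n1 + n2 + n3)
    (hne : (n1 + n2) * (n1 + n3) * (n2 + n3) ≠ 0)
    (hk1 : 4 * n1 ^ 2 ≤ |n3|) (hk2 : 4 * n2 ^ 2 ≤ |n3|) :
    ENNReal.ofReal
        ((n : ℝ) ^ 2 * |(n3 : ℝ)| /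
            (|((3 * (n1 + n2) * (n1 + n3) * (n2 + n3) : ℤ) : ℝ)| ^ ((3 : ℝ) / 2) *
              (jb n1 ^ s * jb n2 ^ s * jb n3 ^ s * jb n ^ (3 * s))) *
          (c n1 * b (-n2) * b n3 * b n ^ 3)) ≤
      ENNReal.ofReal (9 / 4 * 2 ^ s) *
        ((∑' k : ℤ, ENNReal.ofReal (b k) ^ p) ^ (1 / p)) ^ 4 *
        (ENNReal.ofReal (|((n1 + n2 : ℤ) : ℝ)| ^ (-(3 : ℝ) / 2)) *
          (ENNReal.ofReal (jb n1 ^ (-(3 * s))) * ENNReal.ofReal (c n1)) *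
          (ENNReal.ofReal (jb n3 ^ (-(2 * s))) * ENNReal.ofReal (b n3))) := by
  have hW := weight_bound hs0 n n1 n2 n3 hn hne hk1 hk2
  have hWnn : 0 ≤ (n : ℝ) ^ 2 * |(n3 : ℝ)| /
      (|((3 * (n1 + n2) * (n1 + n3) * (n2 + n3) : ℤ) : ℝ)| ^ ((3 : ℝ) / 2) *
        (jb n1 ^ s * jb n2 ^ s * jb n3 ^ s * jb n ^ (3 * s))) := by
    apply div_nonneg (by positivity)
    apply mul_nonneg (Real.rpow_nonneg (abs_nonneg _) _)
    exact mul_nonneg (mul_nonneg (mul_nonneg (Real.rpow_nonneg (jb_nonneg _) _)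
      (Real.rpow_nonneg (jb_nonneg _) _)) (Real.rpow_nonneg (jb_nonneg _) _))
      (Real.rpow_nonneg (jb_nonneg _) _)
  have hcb : 0 ≤ c n1 * b (-n2) := mul_nonneg (hc n1) (hb (-n2))
  have hcbb : 0 ≤ c n1 * b (-n2) * b n3 := mul_nonneg hcb (hb n3)
  rw [ENNReal.ofReal_mul hWnn, ENNReal.ofReal_mul hcbb, ENNReal.ofReal_mul hcb,
    ENNReal.ofReal_mul (hc n1), ENNReal.ofReal_pow (hb n)]
  set Bq := (∑' k : ℤ, ENNReal.ofReal (b k) ^ p) ^ (1 / p) with hBqdef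
  have hWof : ENNReal.ofReal ((n : ℝ) ^ 2 * |(n3 : ℝ)| /
      (|((3 * (n1 + n2) * (n1 + n3) * (n2 + n3) : ℤ) : ℝ)| ^ ((3 : ℝ) / 2) *
        (jb n1 ^ s * jb n2 ^ s * jb n3 ^ s * jb n ^ (3 * s)))) ≤
      ENNReal.ofReal (9 / 4 * 2 ^ s) *
        (ENNReal.ofReal (|((n1 + n2 : ℤ) : ℝ)| ^ (-(3 : ℝ) / 2)) *
          (ENNReal.ofReal (jb n1 ^ (-(3 * s))) * ENNReal.ofReal (jb n3 ^ (-(2 * s))))) := by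
    refine (ENNReal.ofReal_le_ofReal hW).trans_eq ?_
    rw [ENNReal.ofReal_mul (by positivity : (0:ℝ) ≤ 9 / 4 * 2 ^ s),
      ENNReal.ofReal_mul (Real.rpow_nonneg (abs_nonneg _) _),
      ENNReal.ofReal_mul (Real.rpow_nonneg (jb_nonneg _) _)]
  have hBneg : ENNReal.ofReal (b (-n2)) ≤ Bq := ofReal_le_lp b hp0 (-n2)
  have hBn : ENNReal.ofReal (b n) ^ 3 ≤ Bq ^ 3 :=
    pow_le_pow_left₀ zero_le (ofReal_le_lp b hp0 n) 3
  calc ENNReal.ofReal ((n : ℝ) ^ 2 * |(n3 : ℝ)| /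
        (|((3 * (n1 + n2) * (n1 + n3) * (n2 + n3) : ℤ) : ℝ)| ^ ((3 : ℝ) / 2) *
          (jb n1 ^ s * jb n2 ^ s * jb n3 ^ s * jb n ^ (3 * s)))) *
        (ENNReal.ofReal (c n1) * ENNReal.ofReal (b (-n2)) * ENNReal.ofReal (b n3) *
          ENNReal.ofReal (b n) ^ 3)
      ≤ (ENNReal.ofReal (9 / 4 * 2 ^ s) *
          (ENNReal.ofReal (|((n1 + n2 : ℤ) : ℝ)| ^ (-(3 : ℝ) / 2)) *
            (ENNReal.ofReal (jb n1 ^ (-(3 * s))) * ENNReal.ofReal (jb n3 ^ (-(2 * s)))))) *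
        (ENNReal.ofReal (c n1) * Bq * ENNReal.ofReal (b n3) * Bq ^ 3) := by
        refine mul_le_mul' hWof ?_
        exact mul_le_mul' (mul_le_mul' (mul_le_mul' le_rfl hBneg) le_rfl) hBn
    _ = ENNReal.ofReal (9 / 4 * 2 ^ s) * Bq ^ 4 *
        (ENNReal.ofReal (|((n1 + n2 : ℤ) : ℝ)| ^ (-(3 : ℝ) / 2)) *
          (ENNReal.ofReal (jb n1 ^ (-(3 * s))) * ENNReal.ofReal (c n1)) *
          (ENNReal.ofReal (jb n3 ^ (-(2 * s))) * ENNReal.ofReal (b n3))) := by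
        ring

set_option maxHeartbeats 1000000 in
theorem stmt16 (p s : ℝ) (hp : 1 < p) (hs : 1 / 2 - 1 / (2 * p) < s) :
    ∃ C : ℝ, 0 < C ∧ ∀ b c : ℤ → ℝ, (∀ n, 0 ≤ b n) → (∀ n, 0 ≤ c n) →
      (∑' x : {q : ℤ × ℤ × ℤ × ℤ //
          q.1 = q.2.1 + q.2.2.1 + q.2.2.2 ∧
          (q.2.1 + q.2.2.1) * (q.2.1 + q.2.2.2) * (q.2.2.1 + q.2.2.2) ≠ 0 ∧
          4 * q.2.1 ^ 2 ≤ |q.2.2.2| ∧ 4 * q.2.2.1 ^ 2 ≤ |q.2.2.2|},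
        ENNReal.ofReal
          ((x.1.1 : ℝ) ^ 2 * |(x.1.2.2.2 : ℝ)| /
              (|((3 * (x.1.2.1 + x.1.2.2.1) * (x.1.2.1 + x.1.2.2.2) *
                  (x.1.2.2.1 + x.1.2.2.2) : ℤ) : ℝ)| ^ ((3 : ℝ) / 2) *
                (jb (x.1.2.1 : ℝ) ^ s * jb (x.1.2.2.1 : ℝ) ^ s * jb (x.1.2.2.2 : ℝ) ^ s *
                  jb (x.1.1 : ℝ) ^ (3 * s))) *
            (c x.1.2.1 * b (-x.1.2.2.1) * b x.1.2.2.2 * b x.1.1 ^ 3))) ≤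
        ENNReal.ofReal C * (∑' n : ℤ, ENNReal.ofReal (c n) ^ p) ^ (1 / p) *
          ((∑' n : ℤ, ENNReal.ofReal (b n) ^ p) ^ (1 / p)) ^ (5 : ℕ) := by
  have hp0 : 0 < p := lt_trans one_pos hp
  have hhalf : 1 / (2 * p) < 1 / 2 := by
    rw [div_lt_div_iff₀ (by positivity) (by norm_num)]
    linarith
  have hs0 : 0 < s := by linarith
  have hp1 : p - 1 ≠ 0 := by intro h; rw [sub_eq_zero] at h; exact (ne_of_gt hp) h
  set q : ℝ := p / (p - 1) with hqdef
  have hpq : p.HolderConjugate q := by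
    rw [Real.holderConjugate_iff]
    constructor
    · exact hp
    · rw [hqdef]; field_simp; ring
  have hq0 : 0 < q := hpq.symm.pos
  have hinv : p⁻¹ + q⁻¹ = 1 := hpq.inv_add_inv_eq_one
  have h2q : (1 : ℝ) / (2 * q) = 1 / 2 - 1 / (2 * p) := by
    have hq' : q⁻¹ = 1 - p⁻¹ := by linarith
    rw [one_div, mul_inv, hq', one_div, one_div, mul_inv]
    ring
  have hsq' : 1 / (2 * q) < s := by rw [h2q]; exact hs
  have hsq : 1 < 2 * s * q := by
    rw [div_lt_iff₀ (by positivity)] at hsq'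
    nlinarith
  have hsq3 : 1 < 3 * s * q := by nlinarith [mul_pos hs0 hq0]
  -- constants
  set Kw : ℝ≥0∞ := ∑' m : ℤ, ENNReal.ofReal (|(m : ℝ)| ^ (-(3 : ℝ) / 2)) with hKwdef
  have hKwne : Kw ≠ ∞ := by
    rw [hKwdef, tsum_congr (fun m : ℤ =>
      (by rw [show (-(3 : ℝ) / 2) = -((3 : ℝ) / 2) by ring] :
        ENNReal.ofReal (|(m : ℝ)| ^ (-(3 : ℝ) / 2))
          = ENNReal.ofReal (|(m : ℝ)| ^ (-((3 : ℝ) / 2)))))]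
    exact tsum_abs_rpow_ne_top (by norm_num)
  have hpow1 : ∀ k : ℤ, ENNReal.ofReal (jb (k : ℝ) ^ (-(3 * s))) ^ q
      = ENNReal.ofReal (jb (k : ℝ) ^ (-(3 * s * q))) := by
    intro k
    rw [ENNReal.ofReal_rpow_of_nonneg (Real.rpow_nonneg (jb_nonneg _) _) hq0.le,
      ← Real.rpow_mul (jb_nonneg _), show -(3 * s) * q = -(3 * s * q) by ring]
  have hpow3 : ∀ k : ℤ, ENNReal.ofReal (jb (k : ℝ) ^ (-(2 * s))) ^ q
      = ENNReal.ofReal (jb (k : ℝ) ^ (-(2 * s * q))) := by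
    intro k
    rw [ENNReal.ofReal_rpow_of_nonneg (Real.rpow_nonneg (jb_nonneg _) _) hq0.le,
      ← Real.rpow_mul (jb_nonneg _), show -(2 * s) * q = -(2 * s * q) by ring]
  set K1 : ℝ≥0∞ := (∑' k : ℤ, ENNReal.ofReal (jb (k : ℝ) ^ (-(3 * s))) ^ q) ^ (1 / q)
    with hK1def
  have hK1ne : K1 ≠ ∞ := by
    rw [hK1def, tsum_congr hpow1]
    exact ENNReal.rpow_ne_top_of_nonneg (by positivity) (tsum_jb_rpow_ne_top hsq3)
  set K3 : ℝ≥0∞ := (∑' k : ℤ, ENNReal.ofReal (jb (k : ℝ) ^ (-(2 * s))) ^ q) ^ (1 / q)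
    with hK3def
  have hK3ne : K3 ≠ ∞ := by
    rw [hK3def, tsum_congr hpow3]
    exact ENNReal.rpow_ne_top_of_nonneg (by positivity) (tsum_jb_rpow_ne_top hsq)
  set K0 : ℝ≥0∞ := ENNReal.ofReal (9 / 4 * 2 ^ s) with hK0def
  have hKfin : K0 * Kw * K1 * K3 ≠ ∞ :=
    ENNReal.mul_ne_top (ENNReal.mul_ne_top (ENNReal.mul_ne_top ENNReal.ofReal_ne_top hKwne)
      hK1ne) hK3ne
  refine ⟨(K0 * Kw * K1 * K3).toReal + 1, by positivity, ?_⟩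
  intro b c hb hc
  set Bq := (∑' n : ℤ, ENNReal.ofReal (b n) ^ p) ^ (1 / p) with hBqdef
  set Cq := (∑' n : ℤ, ENNReal.ofReal (c n) ^ p) ^ (1 / p) with hCqdef
  have hinj : Function.Injective
      (fun x : {q : ℤ × ℤ × ℤ × ℤ //
          q.1 = q.2.1 + q.2.2.1 + q.2.2.2 ∧
          (q.2.1 + q.2.2.1) * (q.2.1 + q.2.2.2) * (q.2.2.1 + q.2.2.2) ≠ 0 ∧
          4 * q.2.1 ^ 2 ≤ |q.2.2.2| ∧ 4 * q.2.2.1 ^ 2 ≤ |q.2.2.2|} =>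
        (x.1.2.1, x.1.2.2.1, x.1.2.2.2)) := by
    intro u v huv
    simp only [Prod.mk.injEq] at huv
    obtain ⟨h1, h2, h3⟩ := huv
    apply Subtype.ext
    have hu := u.2.1
    have hv := v.2.1
    have h0 : u.1.1 = v.1.1 := by rw [hu, hv, h1, h2, h3]
    exact Prod.ext h0 (Prod.ext h1 (Prod.ext h2 h3))
  have S3le : (∑' k : ℤ, ENNReal.ofReal (jb (k : ℝ) ^ (-(2 * s))) * ENNReal.ofReal (b k))
      ≤ Bq * K3 := by
    rw [tsum_congr (fun k : ℤ => mul_comm (ENNReal.ofReal (jb (k : ℝ) ^ (-(2 * s))))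
      (ENNReal.ofReal (b k)))]
    exact tsum_holder _ _ hpq
  have S1le : (∑' k : ℤ, ENNReal.ofReal (jb (k : ℝ) ^ (-(3 * s))) * ENNReal.ofReal (c k))
      ≤ Cq * K1 := by
    rw [tsum_congr (fun k : ℤ => mul_comm (ENNReal.ofReal (jb (k : ℝ) ^ (-(3 * s))))
      (ENNReal.ofReal (c k)))]
    exact tsum_holder _ _ hpq
  -- the dominating function on ℤ³
  set G : ℤ × ℤ × ℤ → ℝ≥0∞ := fun y =>
    ENNReal.ofReal (|((y.1 + y.2.1 : ℤ) : ℝ)| ^ (-(3 : ℝ) / 2)) *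
      (ENNReal.ofReal (jb (y.1 : ℝ) ^ (-(3 * s))) * ENNReal.ofReal (c y.1)) *
      (ENNReal.ofReal (jb (y.2.2 : ℝ) ^ (-(2 * s))) * ENNReal.ofReal (b y.2.2)) with hGdef
  have hGsum : (∑' y : ℤ × ℤ × ℤ, G y) ≤ Kw * ((Cq * K1) * (Bq * K3)) := by
    have htrans : ∀ a : ℤ, (∑' b2 : ℤ,
        ENNReal.ofReal (|((a + b2 : ℤ) : ℝ)| ^ (-(3 : ℝ) / 2))) = Kw := by
      intro a
      rw [hKwdef]
      simpa using (Equiv.addLeft a).tsum_eq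
        (fun m : ℤ => ENNReal.ofReal (|(m : ℝ)| ^ (-(3 : ℝ) / 2)))
    have hGeq : (∑' y : ℤ × ℤ × ℤ, G y)
        = Kw * ((∑' k : ℤ, ENNReal.ofReal (jb (k : ℝ) ^ (-(3 * s))) * ENNReal.ofReal (c k)) *
            (∑' k : ℤ, ENNReal.ofReal (jb (k : ℝ) ^ (-(2 * s))) * ENNReal.ofReal (b k))) := by
      rw [show (∑' y : ℤ × ℤ × ℤ, G y) = ∑' a : ℤ, ∑' z : ℤ × ℤ, G (a, z) from
        ENNReal.tsum_prod (f := fun a z => G (a, z))]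
      have step : ∀ a : ℤ, (∑' z : ℤ × ℤ, G (a, z))
          = Kw * ((ENNReal.ofReal (jb (a : ℝ) ^ (-(3 * s))) * ENNReal.ofReal (c a)) *
              (∑' k : ℤ, ENNReal.ofReal (jb (k : ℝ) ^ (-(2 * s))) * ENNReal.ofReal (b k))) := by
        intro a
        rw [show (∑' z : ℤ × ℤ, G (a, z)) = ∑' b2 : ℤ, ∑' c3 : ℤ, G (a, b2, c3) from
          ENNReal.tsum_prod (f := fun b2 c3 => G (a, b2, c3))]
        calc (∑' b2 : ℤ, ∑' c3 : ℤ, G (a, b2, c3))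
            = ∑' b2 : ℤ, (ENNReal.ofReal (|((a + b2 : ℤ) : ℝ)| ^ (-(3 : ℝ) / 2)) *
                (ENNReal.ofReal (jb (a : ℝ) ^ (-(3 * s))) * ENNReal.ofReal (c a))) *
                (∑' k : ℤ, ENNReal.ofReal (jb (k : ℝ) ^ (-(2 * s))) * ENNReal.ofReal (b k)) := by
              refine tsum_congr fun b2 => ?_
              simp only [hGdef]
              exact ENNReal.tsum_mul_left
          _ = ∑' b2 : ℤ, ENNReal.ofReal (|((a + b2 : ℤ) : ℝ)| ^ (-(3 : ℝ) / 2)) *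
                ((ENNReal.ofReal (jb (a : ℝ) ^ (-(3 * s))) * ENNReal.ofReal (c a)) *
                  (∑' k : ℤ, ENNReal.ofReal (jb (k : ℝ) ^ (-(2 * s))) * ENNReal.ofReal (b k))) := by
              refine tsum_congr fun b2 => ?_
              ring
          _ = (∑' b2 : ℤ, ENNReal.ofReal (|((a + b2 : ℤ) : ℝ)| ^ (-(3 : ℝ) / 2))) *
                ((ENNReal.ofReal (jb (a : ℝ) ^ (-(3 * s))) * ENNReal.ofReal (c a)) *
                  (∑' k : ℤ, ENNReal.ofReal (jb (k : ℝ) ^ (-(2 * s))) * ENNReal.ofReal (b k))) :=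
              ENNReal.tsum_mul_right
          _ = Kw * ((ENNReal.ofReal (jb (a : ℝ) ^ (-(3 * s))) * ENNReal.ofReal (c a)) *
                (∑' k : ℤ, ENNReal.ofReal (jb (k : ℝ) ^ (-(2 * s))) * ENNReal.ofReal (b k))) := by
              rw [htrans a]
      calc (∑' a : ℤ, ∑' z : ℤ × ℤ, G (a, z))
          = ∑' a : ℤ, Kw * ((ENNReal.ofReal (jb (a : ℝ) ^ (-(3 * s))) * ENNReal.ofReal (c a)) *
              (∑' k : ℤ, ENNReal.ofReal (jb (k : ℝ) ^ (-(2 * s))) * ENNReal.ofReal (b k))) :=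
            tsum_congr step
        _ = Kw * ∑' a : ℤ, ((ENNReal.ofReal (jb (a : ℝ) ^ (-(3 * s))) * ENNReal.ofReal (c a)) *
              (∑' k : ℤ, ENNReal.ofReal (jb (k : ℝ) ^ (-(2 * s))) * ENNReal.ofReal (b k))) :=
            ENNReal.tsum_mul_left
        _ = Kw * ((∑' a : ℤ, ENNReal.ofReal (jb (a : ℝ) ^ (-(3 * s))) * ENNReal.ofReal (c a)) *
              (∑' k : ℤ, ENNReal.ofReal (jb (k : ℝ) ^ (-(2 * s))) * ENNReal.ofReal (b k))) := by
            rw [ENNReal.tsum_mul_right]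
    rw [hGeq]
    exact mul_le_mul' le_rfl (mul_le_mul' S1le S3le)
  -- main chain
  calc (∑' x : {q : ℤ × ℤ × ℤ × ℤ //
          q.1 = q.2.1 + q.2.2.1 + q.2.2.2 ∧
          (q.2.1 + q.2.2.1) * (q.2.1 + q.2.2.2) * (q.2.2.1 + q.2.2.2) ≠ 0 ∧
          4 * q.2.1 ^ 2 ≤ |q.2.2.2| ∧ 4 * q.2.2.1 ^ 2 ≤ |q.2.2.2|},
        ENNReal.ofReal
          ((x.1.1 : ℝ) ^ 2 * |(x.1.2.2.2 : ℝ)| /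
              (|((3 * (x.1.2.1 + x.1.2.2.1) * (x.1.2.1 + x.1.2.2.2) *
                  (x.1.2.2.1 + x.1.2.2.2) : ℤ) : ℝ)| ^ ((3 : ℝ) / 2) *
                (jb (x.1.2.1 : ℝ) ^ s * jb (x.1.2.2.1 : ℝ) ^ s * jb (x.1.2.2.2 : ℝ) ^ s *
                  jb (x.1.1 : ℝ) ^ (3 * s))) *
            (c x.1.2.1 * b (-x.1.2.2.1) * b x.1.2.2.2 * b x.1.1 ^ 3)))
      ≤ ∑' x : {q : ℤ × ℤ × ℤ × ℤ //
          q.1 = q.2.1 + q.2.2.1 + q.2.2.2 ∧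
          (q.2.1 + q.2.2.1) * (q.2.1 + q.2.2.2) * (q.2.2.1 + q.2.2.2) ≠ 0 ∧
          4 * q.2.1 ^ 2 ≤ |q.2.2.2| ∧ 4 * q.2.2.1 ^ 2 ≤ |q.2.2.2|},
          (K0 * Bq ^ 4) * G (x.1.2.1, x.1.2.2.1, x.1.2.2.2) := by
        refine ENNReal.tsum_le_tsum fun x => ?_
        have h := point_bound hs0 hp0 b c hb hc x.1.1 x.1.2.1 x.1.2.2.1 x.1.2.2.2
          x.2.1 x.2.2.1 x.2.2.2.1 x.2.2.2.2
        calc ENNReal.ofReal _ ≤ _ := h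
          _ = (K0 * Bq ^ 4) * G (x.1.2.1, x.1.2.2.1, x.1.2.2.2) := by
            rw [hGdef, hK0def, hBqdef]
    _ = (K0 * Bq ^ 4) * ∑' x : {q : ℤ × ℤ × ℤ × ℤ //
          q.1 = q.2.1 + q.2.2.1 + q.2.2.2 ∧
          (q.2.1 + q.2.2.1) * (q.2.1 + q.2.2.2) * (q.2.2.1 + q.2.2.2) ≠ 0 ∧
          4 * q.2.1 ^ 2 ≤ |q.2.2.2| ∧ 4 * q.2.2.1 ^ 2 ≤ |q.2.2.2|},
          G (x.1.2.1, x.1.2.2.1, x.1.2.2.2) := ENNReal.tsum_mul_left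
    _ ≤ (K0 * Bq ^ 4) * ∑' y : ℤ × ℤ × ℤ, G y :=
        mul_le_mul' le_rfl (ENNReal.tsum_comp_le_tsum_of_injective hinj G)
    _ ≤ (K0 * Bq ^ 4) * (Kw * ((Cq * K1) * (Bq * K3))) := mul_le_mul' le_rfl hGsum
    _ = (K0 * Kw * K1 * K3) * Cq * Bq ^ (5 : ℕ) := by ring
    _ ≤ ENNReal.ofReal ((K0 * Kw * K1 * K3).toReal + 1) * Cq * Bq ^ (5 : ℕ) := by
        refine mul_le_mul_left (mul_le_mul_left ?_ Cq) _
        calc K0 * Kw * K1 * K3 = ENNReal.ofReal ((K0 * Kw * K1 * K3).toReal) :=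
              (ENNReal.ofReal_toReal hKfin).symm
          _ ≤ ENNReal.ofReal ((K0 * Kw * K1 * K3).toReal + 1) :=
              ENNReal.ofReal_le_ofReal (by linarith)
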